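/- Let D ⊂ ℝ^d be an open convex set containing 0 with D ⊂ (−1,∞)^d and B(0, r') ⊂ D for some r' ∈ (0,1). Then the projective squeezing function satisfies s_D(0) ≥ r'/(d·r' + √d·(d+1)). -/

import Mathlib

open scoped BigOperators

/-- A projective map of `ℝ^d` on a set `S`, induced by an invertible linear map of
`ℝ^{d+1}` in homogeneous coordinates. -/
def IsProjectiveMap {d : ℕ} (S : Set (EuclideanSpace ℝ (Fin d)))
    (φ : EuclideanSpace ℝ (Fin d) → EuclideanSpace ℝ (Fin d)) : Prop :=
  ∃ A : Matrix (Fin (d + 1)) (Fin (d + 1)) ℝ, IsUnit A.det ∧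
    ∀ x ∈ S,
      A.mulVec (Fin.cons 1 (fun i => x i)) 0 ≠ 0 ∧
      ∀ i : Fin d, φ x i =
        A.mulVec (Fin.cons 1 (fun j => x j)) i.succ /
        A.mulVec (Fin.cons 1 (fun j => x j)) 0

/-- The projective squeezing function. -/
noncomputable def projSqueezing {d : ℕ} (D : Set (EuclideanSpace ℝ (Fin d)))
    (z : EuclideanSpace ℝ (Fin d)) : ℝ :=
  sSup (insert 0 {r : ℝ | 0 < r ∧ ∃ φ, IsProjectiveMap D φ ∧ φ z = 0 ∧
    φ '' D ⊆ Metric.ball 0 1 ∧ Metric.ball 0 r ⊆ φ '' D})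

set_option maxHeartbeats 2000000 in
/-- if `D ⊆ (-1,∞)^d` is an open convex set with `B(0,r') ⊆ D`,
`0 ∈ D`, `r' ∈ (0,1)`, then `s_D(0) ≥ r'/(d·r' + √d·(d+1))`. -/
theorem stmt15 (d : ℕ) (hd : 1 ≤ d) (D : Set (EuclideanSpace ℝ (Fin d)))
    (hD : IsOpen D) (hconv : Convex ℝ D)
    (h0 : (0 : EuclideanSpace ℝ (Fin d)) ∈ D)
    (hV : ∀ x ∈ D, ∀ i, -1 < x i)
    (r' : ℝ) (hr' : r' ∈ Set.Ioo (0 : ℝ) 1)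
    (hball : Metric.ball (0 : EuclideanSpace ℝ (Fin d)) r' ⊆ D) :
    r' / (d * r' + Real.sqrt d * (d + 1)) ≤ projSqueezing D 0 := by
  obtain ⟨hr0, hr1⟩ := hr'
  have hd0 : (0:ℝ) < d := by exact_mod_cast hd
  set c0 := Real.sqrt d with hc0def
  have hc0 : 0 < c0 := Real.sqrt_pos.2 hd0
  have hc0sq : c0 * c0 = d := Real.mul_self_sqrt hd0.le
  -- the matrix
  set A : Matrix (Fin (d+1)) (Fin (d+1)) ℝ :=
    Matrix.of fun i j => if i = 0 then (if j = 0 then c0 * ((d:ℝ)+1) else c0)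
      else if j = i then 1 else 0 with hA
  have hv0 : ∀ x : Fin d → ℝ,
      A.mulVec (Fin.cons 1 x) 0 = c0 * ((d:ℝ) + 1 + ∑ i, x i) := by
    intro x
    simp only [Matrix.mulVec, dotProduct, hA, Matrix.of_apply]
    rw [Fin.sum_univ_succ]
    simp [Fin.succ_ne_zero, Finset.mul_sum, mul_add]
  have hvs : ∀ (x : Fin d → ℝ) (k : Fin d),
      A.mulVec (Fin.cons 1 x) k.succ = x k := by
    intro x k
    simp only [Matrix.mulVec, dotProduct, hA, Matrix.of_apply]
    rw [Fin.sum_univ_succ]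
    simp [Fin.succ_ne_zero, Fin.succ_inj,
      (show ∀ k : Fin d, ¬(0 : Fin (d+1)) = k.succ from
        fun k => (Fin.succ_ne_zero k).symm)]
  have hdet : A.det = c0 * ((d:ℝ)+1) := by
    rw [Matrix.det_succ_column_zero, Fin.sum_univ_succ]
    have hz : ∀ k : Fin d, A k.succ 0 = 0 := by
      intro k
      simp [hA, Fin.succ_ne_zero,
        (show ¬(0 : Fin (d+1)) = k.succ from (Fin.succ_ne_zero k).symm)]
    have hA00 : A 0 0 = c0 * ((d:ℝ)+1) := by simp [hA]
    have hsub : (A.submatrix Fin.succ Fin.succ) = 1 := by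
      ext i j
      simp [hA, Matrix.one_apply, Fin.succ_ne_zero, Fin.succ_inj, eq_comm]
    simp [hz, hsub, hA00]
  -- sum lower bound on D
  have hSgt : ∀ x ∈ D, -(d:ℝ) < ∑ i, x i := by
    intro x hx
    have h := Finset.sum_lt_sum_of_nonempty (f := fun _ : Fin d => (-1:ℝ))
      (g := fun i => x i) (s := Finset.univ)
      ⟨⟨0, hd⟩, Finset.mem_univ _⟩ (fun i _ => hV x hx i)
    simpa using h
  have hdenpos : ∀ x ∈ D, 0 < c0 * ((d:ℝ) + 1 + ∑ i, x i) := by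
    intro x hx
    have := hSgt x hx
    have : (0:ℝ) < (d:ℝ) + 1 + ∑ i, x i := by linarith
    positivity
  set φ : EuclideanSpace ℝ (Fin d) → EuclideanSpace ℝ (Fin d) :=
    fun x => (c0 * ((d:ℝ) + 1 + ∑ i, x i))⁻¹ • x with hφ
  have hφ0 : φ 0 = 0 := by simp [hφ]
  have hproj : IsProjectiveMap D φ := by
    refine ⟨A, isUnit_iff_ne_zero.2 (by rw [hdet]; positivity), ?_⟩
    intro x hx
    have hden := hdenpos x hx
    refine ⟨by rw [hv0]; exact hden.ne', ?_⟩
    intro i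
    rw [hv0, hvs]
    show (c0 * ((d:ℝ) + 1 + ∑ i, x i))⁻¹ * x i = _
    rw [inv_mul_eq_div]
  -- image is in the unit ball
  have himg : φ '' D ⊆ Metric.ball 0 1 := by
    rintro _ ⟨x, hx, rfl⟩
    have hden := hdenpos x hx
    have hSpos : (0:ℝ) < (d:ℝ) + 1 + ∑ i, x i := by
      have := hSgt x hx; linarith
    have h1 : ∀ i, (x i)^2 < ((d:ℝ) + 1 + ∑ j, x j)^2 := by
      intro i
      have hgt := hV x hx i
      have hothers : -((d:ℝ) - 1) ≤ (∑ j, x j) - x i := by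
        have heq : (∑ j, x j) - x i = ∑ j ∈ Finset.univ.erase i, x j := by
          rw [Finset.sum_erase_eq_sub (Finset.mem_univ i)]
        rw [heq]
        have hb : ∀ j ∈ Finset.univ.erase i, (-1:ℝ) ≤ x j :=
          fun j _ => (hV x hx j).le
        have := Finset.sum_le_sum hb
        have hcard : (Finset.univ.erase i).card = d - 1 := by
          rw [Finset.card_erase_of_mem (Finset.mem_univ i)]; simp
        rw [Finset.sum_const, hcard] at this
        have : -((d:ℝ) - 1) ≤ ∑ j ∈ Finset.univ.erase i, x j := by
          have hdc : ((d - 1 : ℕ) : ℝ) = (d:ℝ) - 1 := by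
            have : (1:ℕ) ≤ d := hd
            push_cast [Nat.cast_sub this]; ring
          rw [nsmul_eq_mul, hdc] at this
          linarith
        exact this
      nlinarith
    have h2 : ∑ i, (x i)^2 < (d:ℝ) * ((d:ℝ) + 1 + ∑ j, x j)^2 := by
      calc ∑ i, (x i)^2
          < ∑ _i : Fin d, ((d:ℝ) + 1 + ∑ j, x j)^2 :=
            Finset.sum_lt_sum_of_nonempty ⟨⟨0, hd⟩, Finset.mem_univ _⟩
              (fun i _ => h1 i)
        _ = (d:ℝ) * ((d:ℝ) + 1 + ∑ j, x j)^2 := by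
            simp [Finset.sum_const, Finset.card_univ, nsmul_eq_mul]
    have hnorm : ‖x‖ < c0 * ((d:ℝ) + 1 + ∑ i, x i) := by
      rw [EuclideanSpace.norm_eq]
      have hx2 : ∀ i, ‖x i‖^2 = (x i)^2 := by
        intro i; rw [Real.norm_eq_abs, sq_abs]
      simp only [hx2]
      have : c0 * ((d:ℝ) + 1 + ∑ i, x i)
          = Real.sqrt ((d:ℝ) * ((d:ℝ) + 1 + ∑ i, x i)^2) := by
        rw [Real.sqrt_mul hd0.le, Real.sqrt_sq hSpos.le]
      rw [this]
      exact Real.sqrt_lt_sqrt (by positivity) h2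
    rw [Metric.mem_ball, dist_zero_right]
    show ‖(c0 * ((d:ℝ) + 1 + ∑ i, x i))⁻¹ • x‖ < 1
    rw [norm_smul, Real.norm_eq_abs, abs_of_pos (inv_pos.2 hden)]
    have := (div_lt_one hden).2 hnorm
    rwa [div_eq_inv_mul] at this
  -- the radius
  set den := c0 * ((d:ℝ) + 1) with hdendef
  have hdenp : 0 < den := by positivity
  set ρ := r' / ((d:ℝ) * r' + den) with hρdef
  have hden2 : 0 < (d:ℝ) * r' + den := by positivity
  have hρpos : 0 < ρ := div_pos hr0 hden2
  have hρd : (d:ℝ) * ρ < 1 := by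
    have hEq : (d:ℝ) * ρ = ((d:ℝ) * r') / ((d:ℝ) * r' + den) := by
      rw [hρdef]; ring
    rw [hEq, div_lt_one hden2]
    linarith
  -- the ball of radius ρ is in the image
  have hsub2 : Metric.ball (0 : EuclideanSpace ℝ (Fin d)) ρ ⊆ φ '' D := by
    intro y hy
    rw [Metric.mem_ball, dist_zero_right] at hy
    set T := ∑ i, y i with hT
    have hTle : |T| ≤ c0 * ‖y‖ := by
      set u : EuclideanSpace ℝ (Fin d) := WithLp.toLp 2 (fun _ => (1:ℝ)) with hu
      have hinner : (inner ℝ u y : ℝ) = T := by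
        simp [hT, hu, PiLp.inner_apply, RCLike.inner_apply]
      have hnu : ‖u‖ = c0 := by
        rw [EuclideanSpace.norm_eq]
        simp [hu, hc0def]
      have := abs_real_inner_le_norm u y
      rwa [hinner, hnu] at this
    have hcT : c0 * T < 1 := by
      have h1 : c0 * T ≤ c0 * |T| := by
        have := le_abs_self T
        nlinarith
      have h2 : c0 * |T| ≤ (d:ℝ) * ‖y‖ := by
        have := mul_le_mul_of_nonneg_left hTle hc0.le
        nlinarith
      have h3 : (d:ℝ) * ‖y‖ < (d:ℝ) * ρ := by
        exact mul_lt_mul_of_pos_left hy hd0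
      linarith
    have h1T : 0 < 1 - c0 * T := by linarith
    set c := den / (1 - c0 * T) with hc
    have hcpos : 0 < c := div_pos hdenp h1T
    have hclt : c < (d:ℝ) * r' + den := by
      rw [hc, div_lt_iff₀ h1T]
      have h1 : 1 - (d:ℝ) * ρ < 1 - c0 * T := by
        have h2 : c0 * |T| ≤ (d:ℝ) * ‖y‖ := by
          have := mul_le_mul_of_nonneg_left hTle hc0.le
          nlinarith
        have h1' : c0 * T ≤ c0 * |T| := by
          have := le_abs_self T
          nlinarith
        have h3 : (d:ℝ) * ‖y‖ < (d:ℝ) * ρ := mul_lt_mul_of_pos_left hy hd0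
        linarith
      have h2 : (1 - (d:ℝ) * ρ) * ((d:ℝ) * r' + den) = den := by
        rw [hρdef]
        field_simp
        ring
      nlinarith
    have hmemD : c • y ∈ D := by
      apply hball
      rw [Metric.mem_ball, dist_zero_right, norm_smul, Real.norm_eq_abs,
        abs_of_pos hcpos]
      have h1 : c * ‖y‖ < ((d:ℝ) * r' + den) * ρ := by
        have ha : c * ‖y‖ ≤ c * ρ := by nlinarith [norm_nonneg y]
        have hb : c * ρ < ((d:ℝ) * r' + den) * ρ :=
          mul_lt_mul_of_pos_right hclt hρpos
        linarith
      have h2 : ((d:ℝ) * r' + den) * ρ = r' := by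
        rw [hρdef]
        field_simp
      linarith
    refine ⟨c • y, hmemD, ?_⟩
    have hsum : ∑ i, (c • y) i = c * T := by
      simp [hT, Finset.mul_sum]
    have hdenc : c0 * ((d:ℝ) + 1 + ∑ i, (c • y) i) = c := by
      rw [hsum, hc]
      field_simp
      ring
    show (c0 * ((d:ℝ) + 1 + ∑ i, (c • y) i))⁻¹ • (c • y) = y
    rw [hdenc, smul_smul, inv_mul_cancel₀ hcpos.ne', one_smul]
  -- bounded above
  have hbdd : BddAbove (insert (0:ℝ) {r : ℝ | 0 < r ∧ ∃ ψ, IsProjectiveMap D ψ ∧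
      ψ 0 = 0 ∧ ψ '' D ⊆ Metric.ball 0 1 ∧ Metric.ball 0 r ⊆ ψ '' D}) := by
    refine ⟨1, ?_⟩
    rintro r (rfl | ⟨hr, ψ, -, -, hsub1, hsub2'⟩)
    · exact zero_le_one
    by_contra hcon
    push_neg at hcon
    have hv1 : ‖(EuclideanSpace.single (⟨0, hd⟩ : Fin d) (1:ℝ))‖ = 1 := by
      rw [EuclideanSpace.norm_single]; norm_num
    have h1 : EuclideanSpace.single (⟨0, hd⟩ : Fin d) (1:ℝ) ∈
        Metric.ball (0 : EuclideanSpace ℝ (Fin d)) r := by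
      rw [Metric.mem_ball, dist_zero_right, hv1]; exact hcon
    have h2 := hsub1 (hsub2' h1)
    rw [Metric.mem_ball, dist_zero_right, hv1] at h2
    exact lt_irrefl _ h2
  have hmem : ρ ∈ insert (0:ℝ) {r : ℝ | 0 < r ∧ ∃ ψ, IsProjectiveMap D ψ ∧
      ψ 0 = 0 ∧ ψ '' D ⊆ Metric.ball 0 1 ∧ Metric.ball 0 r ⊆ ψ '' D} :=
    Set.mem_insert_iff.2 (Or.inr ⟨hρpos, φ, hproj, hφ0, himg, hsub2⟩)
  exact le_csSup hbdd hmem
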